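/- Let σ(x) = 1/(1+exp(−x)) be the logistic function and for real numbers a, b set p_a = σ(a), p_b = σ(b). For all a, b ≤ 0, the Rényi divergence of order 1/2 between Bernoulli(p_a) and Bernoulli(p_b) satisfies −2·log(√(p_a·p_b) + √((1−p_a)·(1−p_b))) ≥ (1/32) · exp(min(a,b)) · (a − b)². -/

import Mathlib

/-- The logistic (sigmoid) function `σ(x) = 1/(1+exp(−x))`. -/
noncomputable def logistic (x : ℝ) : ℝ := 1 / (1 + Real.exp (-x))

lemma logistic_pos (x : ℝ) : 0 < logistic x := by
  unfold logistic
  positivity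

lemma logistic_lt_one (x : ℝ) : logistic x < 1 := by
  unfold logistic
  rw [div_lt_one (by positivity)]
  linarith [Real.exp_pos (-x)]

lemma sqrt_logistic (x : ℝ) :
    Real.sqrt (logistic x) = Real.exp (x / 2) / Real.sqrt (1 + Real.exp x) := by
  have hx : logistic x = Real.exp x / (1 + Real.exp x) := by
    unfold logistic
    rw [Real.exp_neg]
    have h1 : (0 : ℝ) < Real.exp x := Real.exp_pos x
    field_simp
    ring
  rw [hx, Real.sqrt_div (Real.exp_pos x).le, ← Real.exp_half]

/-- Key estimate: for `b ≤ a ≤ 0`,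
`(√σ(a) − √σ(b))² ≥ e^b (a−b)²/32`. -/
lemma key_sqrt_bound (a b : ℝ) (ha : a ≤ 0) (hba : b ≤ a) :
    (1 / 32) * Real.exp b * (a - b) ^ 2
      ≤ (Real.sqrt (logistic a) - Real.sqrt (logistic b)) ^ 2 := by
  set u := Real.exp (a / 2) with hu
  set v := Real.exp (b / 2) with hv
  have hupos : 0 < u := Real.exp_pos _
  have hvpos : 0 < v := Real.exp_pos _
  have hu1 : u ≤ 1 := Real.exp_le_one_iff.mpr (by linarith)
  have hvu : v ≤ u := Real.exp_le_exp.mpr (by linarith)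
  have hea : Real.exp a = u ^ 2 := by
    rw [hu, sq, ← Real.exp_add]; ring_nf
  have heb : Real.exp b = v ^ 2 := by
    rw [hv, sq, ← Real.exp_add]; ring_nf
  set A := Real.sqrt (1 + u ^ 2) with hA
  set B := Real.sqrt (1 + v ^ 2) with hB
  have hA2 : A ^ 2 = 1 + u ^ 2 := Real.sq_sqrt (by positivity)
  have hB2 : B ^ 2 = 1 + v ^ 2 := Real.sq_sqrt (by positivity)
  have hApos : 0 < A := Real.sqrt_pos.mpr (by positivity)
  have hBpos : 0 < B := Real.sqrt_pos.mpr (by positivity)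
  set s := Real.sqrt 2 with hs
  have hs2 : s ^ 2 = 2 := Real.sq_sqrt (by norm_num)
  have hspos : 0 < s := Real.sqrt_pos.mpr (by norm_num)
  have hAs : A ≤ s := by
    rw [hA, hs]
    apply Real.sqrt_le_sqrt
    nlinarith
  have hBs : B ≤ s := by
    rw [hB, hs]
    apply Real.sqrt_le_sqrt
    nlinarith
  have hsa : Real.sqrt (logistic a) = u / A := by
    rw [sqrt_logistic, hea]
  have hsb : Real.sqrt (logistic b) = v / B := by
    rw [sqrt_logistic, heb]
  -- step 1: uB - vA ≥ (u-v)/s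
  have e1 : (v * A) ^ 2 = v ^ 2 + u ^ 2 * v ^ 2 := by
    rw [mul_pow, hA2]; ring
  have e2 : (u * B) ^ 2 = u ^ 2 + u ^ 2 * v ^ 2 := by
    rw [mul_pow, hB2]; ring
  have huB : v * A ≤ u * B := by
    have hsq : (v * A) ^ 2 ≤ (u * B) ^ 2 := by
      rw [e1, e2]
      have := pow_le_pow_left₀ hvpos.le hvu 2
      linarith
    exact le_of_pow_le_pow_left₀ two_ne_zero (by positivity) hsq
  have hstep1 : (u - v) / s ≤ u * B - v * A := by
    rw [div_le_iff₀ hspos]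
    have hden : 0 < u * B + v * A := by positivity
    have hident : (u * B - v * A) * (u * B + v * A) = (u - v) * (u + v) := by
      linear_combination u ^ 2 * hB2 - v ^ 2 * hA2
    have hden2 : u * B + v * A ≤ s * (u + v) := by
      calc u * B + v * A ≤ u * s + v * s := by
            have h1 := mul_le_mul_of_nonneg_left hBs hupos.le
            have h2 := mul_le_mul_of_nonneg_left hAs hvpos.le
            linarith
        _ = s * (u + v) := by ring
    have h3 : (u - v) * (u * B + v * A) ≤ (u - v) * (s * (u + v)) :=
      mul_le_mul_of_nonneg_left hden2 (by linarith)
    have h4 : (u * B - v * A) * s * (u * B + v * A) = s * ((u - v) * (u + v)) := by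
      rw [show (u * B - v * A) * s * (u * B + v * A)
          = s * ((u * B - v * A) * (u * B + v * A)) by ring, hident]
    have h5 : (u - v) * (u * B + v * A) ≤ (u * B - v * A) * s * (u * B + v * A) := by
      rw [h4]
      have : (u - v) * (s * (u + v)) = s * ((u - v) * (u + v)) := by ring
      linarith
    exact le_of_mul_le_mul_right h5 hden
  -- step 2: u/A - v/B ≥ (u-v)/(2s)
  have hstep2 : (u - v) / (2 * s) ≤ u / A - v / B := by
    have hAB : A * B ≤ 2 := by
      calc A * B ≤ s * s := mul_le_mul hAs hBs hBpos.le hspos.le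
        _ = 2 := by rw [← sq, hs2]
    have hABpos : 0 < A * B := mul_pos hApos hBpos
    have heq : u / A - v / B = (u * B - v * A) / (A * B) := by
      field_simp
    rw [heq, div_le_div_iff₀ (by positivity) hABpos]
    have h1 : u - v ≤ s * (u * B - v * A) := (div_le_iff₀' hspos).mp hstep1
    have h0 : 0 ≤ u * B - v * A := sub_nonneg.mpr huB
    have c1 : (u - v) * (A * B) ≤ (u - v) * 2 :=
      mul_le_mul_of_nonneg_left hAB (by linarith)
    have c2 : (u - v) * 2 ≤ s * (u * B - v * A) * 2 := by linarith
    have c3 : s * (u * B - v * A) * 2 = (u * B - v * A) * (2 * s) := by ring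
    linarith
  -- step 3: u - v ≥ v*(a-b)/2
  have hstep3 : v * ((a - b) / 2) ≤ u - v := by
    have hx : u = v * Real.exp ((a - b) / 2) := by
      rw [hu, hv, ← Real.exp_add]; ring_nf
    have hexp : (a - b) / 2 + 1 ≤ Real.exp ((a - b) / 2) := Real.add_one_le_exp _
    rw [hx]
    nlinarith
  -- combine
  have hfinal : v * (a - b) / (4 * s) ≤ Real.sqrt (logistic a) - Real.sqrt (logistic b) := by
    rw [hsa, hsb]
    have : v * (a - b) / (4 * s) ≤ (u - v) / (2 * s) := by
      rw [div_le_div_iff₀ (by positivity) (by positivity)]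
      linarith [mul_le_mul_of_nonneg_right hstep3 (by positivity : (0:ℝ) ≤ 4 * s)]
    linarith [hstep2]
  have hnn : 0 ≤ v * (a - b) / (4 * s) := by
    have : 0 ≤ a - b := by linarith
    positivity
  have hsq := pow_le_pow_left₀ hnn hfinal 2
  calc (1 / 32) * Real.exp b * (a - b) ^ 2
      = (v * (a - b) / (4 * s)) ^ 2 := by
        have h4s : (4 * s) ^ 2 = 32 := by rw [mul_pow, hs2]; norm_num
        rw [heb, div_pow, mul_pow, h4s]; ring
    _ ≤ (Real.sqrt (logistic a) - Real.sqrt (logistic b)) ^ 2 := hsq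

/-- For `a, b ≤ 0`, the Rényi divergence of order 1/2 between Bernoulli(σ(a)) and
Bernoulli(σ(b)) is at least `(1/32)·exp(min(a,b))·(a − b)²`. -/
theorem renyi_half_logistic_lower_bound (a b : ℝ) (ha : a ≤ 0) (hb : b ≤ 0) :
    (1 / 32) * Real.exp (min a b) * (a - b) ^ 2
      ≤ -2 * Real.log (Real.sqrt (logistic a * logistic b)
          + Real.sqrt ((1 - logistic a) * (1 - logistic b))) := by
  set p := logistic a with hp
  set q := logistic b with hq
  have hp0 : 0 < p := logistic_pos a
  have hp1 : p < 1 := logistic_lt_one a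
  have hq0 : 0 < q := logistic_pos b
  have hq1 : q < 1 := logistic_lt_one b
  set S := Real.sqrt (p * q) + Real.sqrt ((1 - p) * (1 - q)) with hS
  have hSpos : 0 < S := by
    have : 0 < Real.sqrt (p * q) := Real.sqrt_pos.mpr (by positivity)
    have h2 : 0 ≤ Real.sqrt ((1 - p) * (1 - q)) := Real.sqrt_nonneg _
    linarith
  have hsp := Real.sq_sqrt hp0.le
  have hsq := Real.sq_sqrt hq0.le
  have hsp' := Real.sq_sqrt (by linarith : (0:ℝ) ≤ 1 - p)
  have hsq' := Real.sq_sqrt (by linarith : (0:ℝ) ≤ 1 - q)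
  have hmul1 : Real.sqrt (p * q) = Real.sqrt p * Real.sqrt q := Real.sqrt_mul hp0.le q
  have hmul2 : Real.sqrt ((1 - p) * (1 - q)) = Real.sqrt (1 - p) * Real.sqrt (1 - q) :=
    Real.sqrt_mul (by linarith) _
  -- Hellinger identity: 2 - 2S = (√p-√q)² + (√(1-p)-√(1-q))²
  have hident : 2 - 2 * S
      = (Real.sqrt p - Real.sqrt q) ^ 2 + (Real.sqrt (1 - p) - Real.sqrt (1 - q)) ^ 2 := by
    rw [hS, hmul1, hmul2]
    linear_combination -hsp - hsq - hsp' - hsq'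
  -- log S ≤ S - 1
  have hlog : Real.log S ≤ S - 1 := Real.log_le_sub_one_of_pos hSpos
  have hkey : (1 / 32) * Real.exp (min a b) * (a - b) ^ 2
      ≤ (Real.sqrt p - Real.sqrt q) ^ 2 := by
    rcases le_total b a with h | h
    · rw [min_eq_right h]
      exact key_sqrt_bound a b ha h
    · rw [min_eq_left h]
      have := key_sqrt_bound b a hb h
      calc (1 / 32) * Real.exp a * (a - b) ^ 2
          = (1 / 32) * Real.exp a * (b - a) ^ 2 := by ring
        _ ≤ (Real.sqrt q - Real.sqrt p) ^ 2 := this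
        _ = (Real.sqrt p - Real.sqrt q) ^ 2 := by ring
  have hsq2 : 0 ≤ (Real.sqrt (1 - p) - Real.sqrt (1 - q)) ^ 2 := sq_nonneg _
  linarith [hkey, hlog, hident, hsq2]
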